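/- Let λ > 0, let ν be a compactly supported Borel probability measure on ℝ^m, let c : ℝ^d × ℝ^m → ℝ be continuously differentiable, and let ψ : ℝ^m → ℝ be bounded and Borel measurable. Then the function ψ^{c,λ}(x) = −λ · log ∫ exp((ψ(y) − c(x, y))/λ) dν(y) is continuously differentiable on ℝ^d, with gradient ∇ψ^{c,λ}(x) = [∫ exp((ψ(y) − c(x, y))/λ) · ∇_x c(x, y) dν(y)] / [∫ exp((ψ(y) − c(x, y))/λ) dν(y)]. -/

import Mathlib

open MeasureTheory Metric

variable {d m : ℕ}




noncomputable def gAux (lam : ℝ) (c : EuclideanSpace ℝ (Fin d) × EuclideanSpace ℝ (Fin m) → ℝ)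
    (ψ : EuclideanSpace ℝ (Fin m) → ℝ) (x : EuclideanSpace ℝ (Fin d))
    (y : EuclideanSpace ℝ (Fin m)) : ℝ :=
  Real.exp ((ψ y - c (x, y)) / lam)

noncomputable def DAux (c : EuclideanSpace ℝ (Fin d) × EuclideanSpace ℝ (Fin m) → ℝ)
    (x : EuclideanSpace ℝ (Fin d)) (y : EuclideanSpace ℝ (Fin m)) :
    EuclideanSpace ℝ (Fin d) →L[ℝ] ℝ :=
  (fderiv ℝ c (x, y)).comp (ContinuousLinearMap.inl ℝ _ _)

noncomputable def GAux (lam : ℝ) (c : EuclideanSpace ℝ (Fin d) × EuclideanSpace ℝ (Fin m) → ℝ)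
    (ψ : EuclideanSpace ℝ (Fin m) → ℝ) (x : EuclideanSpace ℝ (Fin d))
    (y : EuclideanSpace ℝ (Fin m)) : EuclideanSpace ℝ (Fin d) →L[ℝ] ℝ :=
  gAux lam c ψ x y • lam⁻¹ • -(DAux c x y)

lemma hD {c : EuclideanSpace ℝ (Fin d) × EuclideanSpace ℝ (Fin m) → ℝ} (hc : ContDiff ℝ 1 c)
    (x : EuclideanSpace ℝ (Fin d)) (y : EuclideanSpace ℝ (Fin m)) :
    HasFDerivAt (fun x' => c (x', y)) (DAux c x y) x :=
  ((hc.differentiable one_ne_zero (x, y)).hasFDerivAt).comp x (hasFDerivAt_prodMk_left x y)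

lemma hG {lam : ℝ} (hlam : lam ≠ 0)
    {c : EuclideanSpace ℝ (Fin d) × EuclideanSpace ℝ (Fin m) → ℝ} (hc : ContDiff ℝ 1 c)
    (ψ : EuclideanSpace ℝ (Fin m) → ℝ) (x : EuclideanSpace ℝ (Fin d))
    (y : EuclideanSpace ℝ (Fin m)) :
    HasFDerivAt (fun x' => gAux lam c ψ x' y) (GAux lam c ψ x y) x := by
  have h1 : HasFDerivAt (fun x' => ψ y - c (x', y)) (-(DAux c x y)) x :=
    (hD hc x y).const_sub (ψ y)
  have h2 : HasFDerivAt (fun x' => (ψ y - c (x', y)) / lam) (lam⁻¹ • -(DAux c x y)) x := by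
    simpa [div_eq_mul_inv] using h1.mul_const lam⁻¹
  simpa [gAux, GAux] using h2.exp



lemma DAux_cont {c : EuclideanSpace ℝ (Fin d) × EuclideanSpace ℝ (Fin m) → ℝ}
    (hc : ContDiff ℝ 1 c) :
    Continuous (fun p : EuclideanSpace ℝ (Fin d) × EuclideanSpace ℝ (Fin m) =>
      DAux c p.1 p.2) := by
  have h := (contDiff_one_iff_fderiv.mp hc).2
  exact (h.comp continuous_id).clm_comp continuous_const

lemma norm_DAux_le {c : EuclideanSpace ℝ (Fin d) × EuclideanSpace ℝ (Fin m) → ℝ}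
    (x : EuclideanSpace ℝ (Fin d)) (y : EuclideanSpace ℝ (Fin m)) :
    ‖DAux c x y‖ ≤ ‖fderiv ℝ c (x, y)‖ := by
  refine le_trans (ContinuousLinearMap.opNorm_comp_le _ _) ?_
  have h1 : ‖(ContinuousLinearMap.inl ℝ (EuclideanSpace ℝ (Fin d))
      (EuclideanSpace ℝ (Fin m)))‖ ≤ 1 := by
    refine ContinuousLinearMap.opNorm_le_bound _ zero_le_one fun z => ?_
    simp [Prod.norm_def]
  calc ‖fderiv ℝ c (x, y)‖ * ‖_‖ ≤ ‖fderiv ℝ c (x, y)‖ * 1 := by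
        exact mul_le_mul_of_nonneg_left h1 (norm_nonneg _)
    _ = ‖fderiv ℝ c (x, y)‖ := mul_one _

lemma mainAux {lam : ℝ} (hlam : 0 < lam)
    (ν : Measure (EuclideanSpace ℝ (Fin m))) [IsProbabilityMeasure ν]
    {K : Set (EuclideanSpace ℝ (Fin m))} (hK : IsCompact K) (hKc : ν Kᶜ = 0)
    {c : EuclideanSpace ℝ (Fin d) × EuclideanSpace ℝ (Fin m) → ℝ} (hc : ContDiff ℝ 1 c)
    {ψ : EuclideanSpace ℝ (Fin m) → ℝ}
    (Mψ : ℝ) (hψb : ∀ y, |ψ y| ≤ Mψ) (hψm : Measurable ψ)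
    (x₀ : EuclideanSpace ℝ (Fin d)) :
    HasFDerivAt (fun x => ∫ y, gAux lam c ψ x y ∂ν) (∫ y, GAux lam c ψ x₀ y ∂ν) x₀ ∧
      Integrable (GAux lam c ψ x₀) ν ∧
      ContinuousAt (fun x => ∫ y, GAux lam c ψ x y ∂ν) x₀ ∧
      Integrable (gAux lam c ψ x₀) ν := by
  have hKmem : ∀ᵐ y ∂ν, y ∈ K := by
    rw [ae_iff]
    simpa [Set.compl_def] using hKc
  -- bounds on the compact set (closedBall x₀ 1) ×ˢ K
  have hS : IsCompact ((closedBall x₀ 1) ×ˢ K) := (isCompact_closedBall _ _).prod hK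
  obtain ⟨Mc, hMc⟩ := hS.exists_bound_of_continuousOn hc.continuous.continuousOn
  obtain ⟨Md0, hMd0⟩ := hS.exists_bound_of_continuousOn
    (contDiff_one_iff_fderiv.mp hc).2.continuousOn
  set Md : ℝ := max Md0 0 with hMdd
  have hMd : ∀ p ∈ (closedBall x₀ 1) ×ˢ K, ‖fderiv ℝ c p‖ ≤ Md :=
    fun p hp => (hMd0 p hp).trans (le_max_left _ _)
  have hMdnn : 0 ≤ Md := le_max_right _ _
  -- pointwise bounds
  have hgb : ∀ x ∈ ball x₀ 1, ∀ y ∈ K, gAux lam c ψ x y ≤ Real.exp ((Mψ + Mc) / lam) := by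
    intro x hx y hy
    have hmem : (x, y) ∈ (closedBall x₀ 1) ×ˢ K := ⟨ball_subset_closedBall hx, hy⟩
    have h1 : ψ y - c (x, y) ≤ Mψ + Mc := by
      have := (abs_le.mp (hψb y)).2
      have h2 := (abs_le.mp (hMc _ hmem)).1
      linarith [(abs_le.mp (hMc _ hmem)).1]
    exact Real.exp_le_exp.mpr (div_le_div_of_nonneg_right h1 hlam.le |>.trans_eq rfl)
  have hGb : ∀ x ∈ ball x₀ 1, ∀ y ∈ K,
      ‖GAux lam c ψ x y‖ ≤ Real.exp ((Mψ + Mc) / lam) * (lam⁻¹ * Md) := by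
    intro x hx y hy
    have hmem : (x, y) ∈ (closedBall x₀ 1) ×ˢ K := ⟨ball_subset_closedBall hx, hy⟩
    have hDle : ‖DAux c x y‖ ≤ Md := (norm_DAux_le x y).trans (by
      simpa using hMd _ hmem)
    have hgpos : 0 < gAux lam c ψ x y := Real.exp_pos _
    calc ‖GAux lam c ψ x y‖ = gAux lam c ψ x y * (lam⁻¹ * ‖DAux c x y‖) := by
          simp [GAux, norm_smul, abs_of_pos hgpos, abs_of_pos hlam,
            abs_of_pos (inv_pos.mpr hlam), mul_assoc]
      _ ≤ Real.exp ((Mψ + Mc) / lam) * (lam⁻¹ * Md) := by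
          have := hgb x hx y hy
          have h2 : lam⁻¹ * ‖DAux c x y‖ ≤ lam⁻¹ * Md :=
            mul_le_mul_of_nonneg_left hDle (inv_pos.mpr hlam).le
          exact mul_le_mul this h2 (by positivity) (Real.exp_pos _).le
  -- measurability
  have hgm : ∀ x, Measurable (gAux lam c ψ x) := fun x =>
    Real.measurable_exp.comp
      ((hψm.sub (hc.continuous.comp (Continuous.prodMk_right x)).measurable).div_const lam)
  have hGm : ∀ x, AEStronglyMeasurable (GAux lam c ψ x) ν := fun x => by
    refine ((hgm x).aestronglyMeasurable).smul ?_
    exact (((DAux_cont hc).comp (Continuous.prodMk_right x)).neg.const_smul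
      lam⁻¹).aestronglyMeasurable
  -- integrability of gAux
  have hgint : ∀ x ∈ ball x₀ 1, Integrable (gAux lam c ψ x) ν := by
    intro x hx
    refine Integrable.mono' (integrable_const (Real.exp ((Mψ + Mc) / lam)))
      (hgm x).aestronglyMeasurable ?_
    filter_upwards [hKmem] with y hy
    rw [Real.norm_eq_abs, abs_of_pos (show (0:ℝ) < gAux lam c ψ x y from Real.exp_pos _)]
    exact hgb x hx y hy
  have hGint : Integrable (GAux lam c ψ x₀) ν := by
    refine Integrable.mono' (integrable_const (Real.exp ((Mψ + Mc) / lam) * (lam⁻¹ * Md)))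
      (hGm x₀) ?_
    filter_upwards [hKmem] with y hy
    exact hGb x₀ (mem_ball_self one_pos) y hy
  have hderiv : HasFDerivAt (fun x => ∫ y, gAux lam c ψ x y ∂ν)
      (∫ y, GAux lam c ψ x₀ y ∂ν) x₀ := by
    refine hasFDerivAt_integral_of_dominated_of_fderiv_le
      (bound := fun _ => Real.exp ((Mψ + Mc) / lam) * (lam⁻¹ * Md)) (ball_mem_nhds x₀ one_pos)
      (Filter.Eventually.of_forall fun x => (hgm x).aestronglyMeasurable)
      (hgint x₀ (mem_ball_self one_pos)) (hGm x₀) ?_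
      (integrable_const _) ?_
    · filter_upwards [hKmem] with y hy x hx
      exact hGb x hx y hy
    · exact Filter.Eventually.of_forall fun y =>
        fun x _ => hG hlam.ne' hc ψ x y
  refine ⟨hderiv, hGint, ?_, hgint x₀ (mem_ball_self one_pos)⟩
  -- continuity of the derivative integral
  refine continuousAt_of_dominated (bound := fun _ => Real.exp ((Mψ + Mc) / lam) * (lam⁻¹ * Md))
    (Filter.Eventually.of_forall hGm) ?_ (integrable_const _) ?_
  · filter_upwards [ball_mem_nhds x₀ one_pos] with x hx
    filter_upwards [hKmem] with y hy
    exact hGb x hx y hy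
  · refine Filter.Eventually.of_forall fun y => ?_
    have hgc : Continuous fun x => gAux lam c ψ x y := by
      unfold gAux
      exact Real.continuous_exp.comp
        (((continuous_const.sub (hc.continuous.comp
          (continuous_id.prodMk continuous_const))).div_const lam))
    exact (hgc.smul ((((DAux_cont hc).comp
      (continuous_id.prodMk continuous_const)).neg.const_smul lam⁻¹))).continuousAt

/-- For `λ > 0`, a compactly supported Borel probability measure `ν` on `ℝ^m`, a `C¹`
cost `c : ℝ^d × ℝ^m → ℝ`, and a bounded Borel measurable `ψ : ℝ^m → ℝ`, the
`(c,λ)`-transform `ψ^{c,λ}(x) = -λ log ∫ exp((ψ(y) - c(x,y))/λ) dν(y)` is `C¹`, with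
gradient the `ν`-weighted softmin average of `∇_x c(x, y)`. -/
theorem cLambda_transform_contDiff_gradient {d m : ℕ}
    (lam : ℝ) (hlam : 0 < lam)
    (ν : Measure (EuclideanSpace ℝ (Fin m))) [IsProbabilityMeasure ν]
    (hν : ∃ K : Set (EuclideanSpace ℝ (Fin m)), IsCompact K ∧ ν Kᶜ = 0)
    (c : EuclideanSpace ℝ (Fin d) × EuclideanSpace ℝ (Fin m) → ℝ)
    (hc : ContDiff ℝ 1 c)
    (ψ : EuclideanSpace ℝ (Fin m) → ℝ)
    (Mψ : ℝ) (hψb : ∀ y, |ψ y| ≤ Mψ) (hψm : Measurable ψ) :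
    ContDiff ℝ 1 (fun x : EuclideanSpace ℝ (Fin d) =>
      -lam * Real.log (∫ y, Real.exp ((ψ y - c (x, y)) / lam) ∂ν)) ∧
    ∀ x : EuclideanSpace ℝ (Fin d),
      gradient (fun x' : EuclideanSpace ℝ (Fin d) =>
          -lam * Real.log (∫ y, Real.exp ((ψ y - c (x', y)) / lam) ∂ν)) x =
        (∫ y, Real.exp ((ψ y - c (x, y)) / lam) ∂ν)⁻¹ •
          ∫ y, Real.exp ((ψ y - c (x, y)) / lam) •
            gradient (fun x' : EuclideanSpace ℝ (Fin d) => c (x', y)) x ∂ν := by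
  obtain ⟨K, hK, hKc⟩ := hν
  have key := fun x₀ => mainAux hlam ν hK hKc hc Mψ hψb hψm x₀
  have hFpos : ∀ x, 0 < ∫ y, gAux lam c ψ x y ∂ν := by
    intro x
    rw [integral_pos_iff_support_of_nonneg_ae (μ := ν) (f := gAux lam c ψ x)
      (Filter.Eventually.of_forall fun y => (Real.exp_pos _).le) (key x).2.2.2]
    have hs : Function.support (gAux lam c ψ x) = Set.univ :=
      Set.eq_univ_of_forall fun y => (Real.exp_pos _).ne'
    rw [hs]
    simp
  have hFdiff : ∀ x, HasFDerivAt (fun x' => ∫ y, gAux lam c ψ x' y ∂ν)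
      (∫ y, GAux lam c ψ x y ∂ν) x := fun x => (key x).1
  have hFcont : ContDiff ℝ 1 (fun x => ∫ y, gAux lam c ψ x y ∂ν) := by
    rw [contDiff_one_iff_fderiv]
    refine ⟨fun x => (hFdiff x).differentiableAt, ?_⟩
    have he : (fderiv ℝ fun x => ∫ y, gAux lam c ψ x y ∂ν) =
        fun x => ∫ y, GAux lam c ψ x y ∂ν := funext fun x => (hFdiff x).fderiv
    rw [he]
    exact continuous_iff_continuousAt.mpr fun x => (key x).2.2.1
  constructor
  · exact contDiff_const.mul (hFcont.log fun x => (hFpos x).ne')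
  · intro x
    show gradient (fun x' => -lam * Real.log (∫ y, gAux lam c ψ x' y ∂ν)) x =
      (∫ y, gAux lam c ψ x y ∂ν)⁻¹ •
        ∫ y, gAux lam c ψ x y • gradient (fun x' => c (x', y)) x ∂ν
    have hlog : HasFDerivAt (fun x' => -lam * Real.log (∫ y, gAux lam c ψ x' y ∂ν))
        ((-lam) • ((∫ y, gAux lam c ψ x y ∂ν)⁻¹ • (∫ y, GAux lam c ψ x y ∂ν))) x :=
      ((hFdiff x).log (hFpos x).ne').const_mul (-lam)
    have hgrad_eq : gradient (fun x' => -lam * Real.log (∫ y, gAux lam c ψ x' y ∂ν)) x =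
        (InnerProductSpace.toDual ℝ (EuclideanSpace ℝ (Fin d))).symm
          ((-lam) • ((∫ y, gAux lam c ψ x y ∂ν)⁻¹ • (∫ y, GAux lam c ψ x y ∂ν))) := by
      rw [gradient, hlog.fderiv]
    have hDgrad : ∀ y, (InnerProductSpace.toDual ℝ (EuclideanSpace ℝ (Fin d))).symm
        (DAux c x y) = gradient (fun x' => c (x', y)) x := by
      intro y
      rw [gradient, (hD hc x y).fderiv]
    have hpt : ∀ y, (InnerProductSpace.toDual ℝ (EuclideanSpace ℝ (Fin d))).symm
        (GAux lam c ψ x y) =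
        (-lam⁻¹) • (gAux lam c ψ x y • gradient (fun x' => c (x', y)) x) := by
      intro y
      rw [GAux, _root_.map_smul, _root_.map_smul, map_neg, hDgrad]
      module
    have hcomm := ((InnerProductSpace.toDual ℝ
        (EuclideanSpace ℝ (Fin d))).symm.toLinearIsometry).integral_comp_comm
        (μ := ν) (fun y => GAux lam c ψ x y)
    rw [hgrad_eq, _root_.map_smul, _root_.map_smul]
    rw [show ((InnerProductSpace.toDual ℝ (EuclideanSpace ℝ (Fin d))).symm
        (∫ y, GAux lam c ψ x y ∂ν)) =
        ∫ y, (InnerProductSpace.toDual ℝ (EuclideanSpace ℝ (Fin d))).symm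
          (GAux lam c ψ x y) ∂ν from hcomm.symm]
    simp_rw [hpt]
    rw [integral_smul, smul_smul, smul_smul]
    congr 1
    rw [mul_comm]
    field_simp [hlam.ne', (hFpos x).ne']
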